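/- Formal Nullstellensatz for chains of prime ideals. Let R be a commutative ring and ((J₀,U₀),…,(J_ℓ,U_ℓ)) an idealistic chain in R. There exist prime ideals P₀ ⊆ P₁ ⊆ ⋯ ⊆ P_ℓ of R with J_i ⊆ P_i and U_i ∩ P_i = ∅ for all i = 0,…,ℓ, if and only if the idealistic chain does not collapse, i.e. for all j_i in the ideal generated by J_i and all u_i in the multiplicative submonoid generated by U_i one has u₀·(u₁·(⋯(u_ℓ + j_ℓ)+⋯)+j₁)+j₀ ≠ 0. -/

import Mathlib

namespace IdealisticChainAux

variable {R : Type*} [CommRing R]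

/-- Nested value of a chain expression. -/
def nv : (n : ℕ) → (u j : Fin n → R) → R
  | 0, _, _ => 1
  | n+1, u, j => u 0 * nv n (Fin.tail u) (Fin.tail j) + j 0

/-- Set of achievable nested values for an idealistic chain. -/
def Tset : (n : ℕ) → (J U : Fin n → Set R) → Set R
  | 0, _, _ => {1}
  | n+1, J, U => {x | ∃ u ∈ Submonoid.closure (U 0), ∃ e ∈ Tset n (Fin.tail J) (Fin.tail U),
      ∃ k ∈ Ideal.span (J 0), x = u * e + k}

lemma one_mem_Tset : ∀ (n : ℕ) (J U : Fin n → Set R), (1:R) ∈ Tset n J U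
  | 0, _, _ => rfl
  | n+1, J, U =>
    ⟨1, one_mem _, 1, one_mem_Tset n _ _, 0, zero_mem _, by ring⟩

lemma mul_mem_Tset : ∀ (n : ℕ) (J U : Fin n → Set R) {a b : R},
    a ∈ Tset n J U → b ∈ Tset n J U → a * b ∈ Tset n J U
  | 0, _, _, a, b, ha, hb => by
    simp only [Tset, Set.mem_singleton_iff] at *
    rw [ha, hb, one_mul]
  | n+1, J, U, a, b, ha, hb => by
    obtain ⟨u, hu, e, he, k, hk, rfl⟩ := ha
    obtain ⟨u', hu', e', he', k', hk', rfl⟩ := hb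
    refine ⟨u * u', mul_mem hu hu', e * e', mul_mem_Tset n _ _ he he',
      (u * e) * k' + k * (u' * e') + k * k', ?_, by ring⟩
    exact add_mem (add_mem (Ideal.mul_mem_left _ _ hk') (Ideal.mul_mem_right _ _ hk))
      (Ideal.mul_mem_right _ _ hk)

lemma pow_mem_Tset (n : ℕ) (J U : Fin n → Set R) {a : R} (ha : a ∈ Tset n J U) (m : ℕ) :
    a ^ m ∈ Tset n J U := by
  induction m with
  | zero => simpa using one_mem_Tset n J U
  | succ m ih => rw [pow_succ]; exact mul_mem_Tset n J U ih ha

lemma Tset_mono : ∀ (n : ℕ) {J J' U U' : Fin n → Set R},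
    (∀ i, Ideal.span (J i) ≤ Ideal.span (J' i)) →
    (∀ i, Submonoid.closure (U i) ≤ Submonoid.closure (U' i)) →
    Tset n J U ⊆ Tset n J' U'
  | 0, _, _, _, _, _, _ => fun _ hx => hx
  | n+1, J, J', U, U', hJ, hU => by
    rintro x ⟨u, hu, e, he, k, hk, rfl⟩
    exact ⟨u, hU 0 hu, e,
      Tset_mono n (fun i => hJ i.succ) (fun i => hU i.succ) he, k, hJ 0 hk, rfl⟩

lemma mem_closure_insert' {x z : R} {B : Set R} (hz : z ∈ Submonoid.closure (insert x B)) :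
    ∃ (m : ℕ) (w : R), w ∈ Submonoid.closure B ∧ z = x ^ m * w := by
  induction hz using Submonoid.closure_induction with
  | mem y hy =>
    rcases hy with rfl | hy
    · exact ⟨1, 1, one_mem _, by ring⟩
    · exact ⟨0, y, Submonoid.subset_closure hy, by ring⟩
  | one => exact ⟨0, 1, one_mem _, by ring⟩
  | mul a b ha hb iha ihb =>
    obtain ⟨m, w, hw, rfl⟩ := iha
    obtain ⟨m', w', hw', rfl⟩ := ihb
    exact ⟨m + m', w * w', mul_mem hw hw', by ring⟩

/-- The cut lemma at level 0. -/
lemma Tset_cut (n : ℕ) (A B : Set R) (Jt Ut : Fin n → Set R) (x : R)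
    (hA : (0:R) ∈ Tset (n+1) (Fin.cons (insert x A) Jt) (Fin.cons B Ut))
    (hB : (0:R) ∈ Tset (n+1) (Fin.cons A Jt) (Fin.cons (insert x B) Ut)) :
    (0:R) ∈ Tset (n+1) (Fin.cons A Jt) (Fin.cons B Ut) := by
  simp only [Tset, Fin.cons_zero, Fin.tail_cons, Set.mem_setOf_eq] at hA hB ⊢
  obtain ⟨u, hu, e, he, jx, hjx, hEq1⟩ := hA
  obtain ⟨v, hv, f, hf, k0, hk0, hEq2⟩ := hB
  rw [Ideal.mem_span_insert] at hjx
  obtain ⟨a, z, hz, rfl⟩ := hjx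
  obtain ⟨m, w, hw, rfl⟩ := mem_closure_insert' hv
  obtain ⟨c, hc⟩ : (z : R) ∣ (u * e + z) ^ m - (u * e) ^ m := by
    have h := sub_dvd_pow_sub_pow (u * e + z) (u * e) m
    simpa using h
  have h1 : u * e + z = -(a * x) := by linear_combination -hEq1
  have h2 : (u * e) ^ m = (-1) ^ m * a ^ m * x ^ m - z * c := by
    have h3 : (u * e + z) ^ m = (-1) ^ m * a ^ m * x ^ m := by rw [h1]; ring
    linear_combination h3 - hc
  refine ⟨u ^ m * w, mul_mem (pow_mem hu m) hw, e ^ m * f,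
    mul_mem_Tset n _ _ (pow_mem_Tset n _ _ he m) hf,
    z * c * (w * f) + (-1) ^ m * a ^ m * k0, ?_, ?_⟩
  · exact add_mem (Ideal.mul_mem_right _ _ (Ideal.mul_mem_right _ _ hz))
      (Ideal.mul_mem_left _ _ hk0)
  · linear_combination (-(w * f)) * h2 + ((-1) ^ m * a ^ m) * hEq2


/-- Monotonicity in the plain subset sense. -/
lemma Tset_mono' (n : ℕ) {J J' U U' : Fin n → Set R}
    (hJ : ∀ i, J i ⊆ J' i) (hU : ∀ i, U i ⊆ U' i) : Tset n J U ⊆ Tset n J' U' :=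
  Tset_mono n (fun i => Ideal.span_mono (hJ i)) (fun i => Submonoid.closure_mono (hU i))

lemma exists_prime_head (n : ℕ) (Jt Ut : Fin n → Set R) (A B : Set R)
    (h : (0:R) ∉ Tset (n+1) (Fin.cons A Jt) (Fin.cons B Ut)) :
    ∃ P : Ideal R, P.IsPrime ∧ A ⊆ ↑P ∧ B ∩ ↑P = ∅ ∧
      (0:R) ∉ Tset (n+1) (Fin.cons (↑P : Set R) Jt) (Fin.cons B Ut) := by
  classical
  set S1 : Set (Set R) :=
    {B' | B ⊆ B' ∧ (0:R) ∉ Tset (n+1) (Fin.cons A Jt) (Fin.cons B' Ut)} with hS1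
  have hchain1 : ∀ c ⊆ S1, IsChain (· ⊆ ·) c → c.Nonempty →
      ∃ ub ∈ S1, ∀ s ∈ c, s ⊆ ub := by
    intro c hc hchain ⟨B0, hB0⟩
    refine ⟨⋃₀ c, ⟨(hc hB0).1.trans (Set.subset_sUnion_of_mem hB0), ?_⟩,
      fun s hs => Set.subset_sUnion_of_mem hs⟩
    intro hmem
    obtain ⟨u, hu, e, he, k, hk, hEq⟩ := hmem
    rw [Fin.cons_zero, Set.sUnion_eq_iUnion, Submonoid.closure_iUnion] at hu
    have : Nonempty c := ⟨⟨B0, hB0⟩⟩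
    have hdir : Directed (· ≤ ·) (fun B' : c => Submonoid.closure (B' : Set R)) := by
      intro s t
      rcases hchain.total s.2 t.2 with hst | hts
      · exact ⟨t, Submonoid.closure_mono hst, le_rfl⟩
      · exact ⟨s, le_rfl, Submonoid.closure_mono hts⟩
    rw [Submonoid.mem_iSup_of_directed hdir] at hu
    obtain ⟨B', hu⟩ := hu
    exact (hc B'.2).2 ⟨u, hu, e, he, k, hk, hEq⟩
  obtain ⟨Bs, _, hBsmax⟩ := zorn_subset_nonempty S1 hchain1 B ⟨subset_rfl, h⟩
  have hBsS1 : Bs ∈ S1 := hBsmax.prop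
  set S2 : Set (Set R) :=
    {A' | A ⊆ A' ∧ (0:R) ∉ Tset (n+1) (Fin.cons A' Jt) (Fin.cons Bs Ut)} with hS2
  have hchain2 : ∀ c ⊆ S2, IsChain (· ⊆ ·) c → c.Nonempty →
      ∃ ub ∈ S2, ∀ s ∈ c, s ⊆ ub := by
    intro c hc hchain ⟨A0, hA0⟩
    refine ⟨⋃₀ c, ⟨(hc hA0).1.trans (Set.subset_sUnion_of_mem hA0), ?_⟩,
      fun s hs => Set.subset_sUnion_of_mem hs⟩
    intro hmem
    obtain ⟨u, hu, e, he, k, hk, hEq⟩ := hmem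
    rw [Fin.cons_zero, Set.sUnion_eq_iUnion, Ideal.span, Submodule.span_iUnion] at hk
    have : Nonempty c := ⟨⟨A0, hA0⟩⟩
    have hdir : Directed (· ≤ ·) (fun A' : c => Submodule.span R (A' : Set R)) := by
      intro s t
      rcases hchain.total s.2 t.2 with hst | hts
      · exact ⟨t, Submodule.span_mono hst, le_rfl⟩
      · exact ⟨s, le_rfl, Submodule.span_mono hts⟩
    rw [Submodule.mem_iSup_of_directed _ hdir] at hk
    obtain ⟨A', hk⟩ := hk
    exact (hc A'.2).2 ⟨u, hu, e, he, k, hk, hEq⟩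
  obtain ⟨As, hAAs, hAsmax⟩ := zorn_subset_nonempty S2 hchain2 A ⟨subset_rfl, hBsS1.2⟩
  have hAsS2 : As ∈ S2 := hAsmax.prop
  have hNC : (0:R) ∉ Tset (n+1) (Fin.cons As Jt) (Fin.cons Bs Ut) := hAsS2.2
  -- Bs is closed under the monoid operations
  have hBclosed : ∀ y, y ∈ Submonoid.closure Bs → y ∈ Bs := by
    intro y hy
    have hclo : Submonoid.closure (insert y Bs) ≤ Submonoid.closure Bs := by
      rw [Submonoid.closure_le]
      exact Set.insert_subset hy Submonoid.subset_closure
    have hmem : insert y Bs ∈ S1 := by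
      refine ⟨hBsS1.1.trans (Set.subset_insert _ _), fun hc => hBsS1.2 ?_⟩
      refine Tset_mono (n+1) (fun i => le_rfl) ?_ hc
      intro i
      induction i using Fin.cases with
      | zero => simpa [Fin.cons_zero] using hclo
      | succ i => simp [Fin.cons_succ]
    have := hBsmax.2 hmem (Set.subset_insert _ _)
    exact this (Set.mem_insert _ _)
  have hAclosed : ∀ y, y ∈ Ideal.span As → y ∈ As := by
    intro y hy
    have hmem : insert y As ∈ S2 := by
      refine ⟨hAsS2.1.trans (Set.subset_insert _ _), fun hc => hNC ?_⟩
      refine Tset_mono (n+1) ?_ (fun i => le_rfl) hc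
      intro i
      induction i using Fin.cases with
      | zero =>
        simp only [Fin.cons_zero]
        exact le_of_eq (Submodule.span_insert_eq_span hy)
      | succ i => simp [Fin.cons_succ]
    have := hAsmax.2 hmem (Set.subset_insert _ _)
    exact this (Set.mem_insert _ _)
  -- disjointness
  have hdisj : ∀ x, x ∈ As → x ∈ Bs → False := by
    intro x hxA hxB
    refine hNC ⟨x, Submonoid.subset_closure (by simpa [Fin.cons_zero] using hxB),
      1, one_mem_Tset n _ _, -x, ?_, by ring⟩
    exact neg_mem (Ideal.subset_span (by simpa [Fin.cons_zero] using hxA))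
  -- totality
  have htotal : ∀ x : R, x ∈ As ∨ x ∈ Bs := by
    intro x
    by_contra hx
    push_neg at hx
    obtain ⟨hxA, hxB⟩ := hx
    have hcA : (0:R) ∈ Tset (n+1) (Fin.cons (insert x As) Jt) (Fin.cons Bs Ut) := by
      by_contra h'
      have hmem : insert x As ∈ S2 := ⟨hAsS2.1.trans (Set.subset_insert _ _), h'⟩
      exact hxA (hAsmax.2 hmem (Set.subset_insert _ _) (Set.mem_insert _ _))
    have hcB : (0:R) ∈ Tset (n+1) (Fin.cons As Jt) (Fin.cons (insert x Bs) Ut) := by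
      by_contra h'
      have h'' : (0:R) ∉ Tset (n+1) (Fin.cons A Jt) (Fin.cons (insert x Bs) Ut) := by
        intro hc
        refine h' (Tset_mono' (n+1) ?_ (fun i => le_rfl) hc)
        intro i
        induction i using Fin.cases with
        | zero => simpa [Fin.cons_zero] using hAAs
        | succ i => simp [Fin.cons_succ]
      have hmem : insert x Bs ∈ S1 := ⟨hBsS1.1.trans (Set.subset_insert _ _), h''⟩
      exact hxB (hBsmax.2 hmem (Set.subset_insert _ _) (Set.mem_insert _ _))
    exact hNC (Tset_cut n As Bs Jt Ut x hcA hcB)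
  -- build the prime ideal
  refine ⟨Ideal.span As, ?_, ?_, ?_, ?_⟩
  case refine_2 => exact hAAs.trans Ideal.subset_span
  all_goals have hPA : (Ideal.span As : Set R) = As :=
    Set.Subset.antisymm (fun y hy => hAclosed y hy) Ideal.subset_span
  · constructor
    · rw [Ideal.ne_top_iff_one]
      intro h1
      exact hdisj 1 (by rwa [← hPA]) (hBclosed 1 (one_mem _))
    · intro x y hxy
      by_contra hcon
      push_neg at hcon
      obtain ⟨hx, hy⟩ := hcon
      have hxB : x ∈ Bs := (htotal x).resolve_left (fun hh => hx (Ideal.subset_span hh))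
      have hyB : y ∈ Bs := (htotal y).resolve_left (fun hh => hy (Ideal.subset_span hh))
      have : x * y ∈ Bs :=
        hBclosed _ (mul_mem (Submonoid.subset_closure hxB) (Submonoid.subset_closure hyB))
      exact hdisj (x * y) (by rwa [← hPA]) this
  · rw [Set.eq_empty_iff_forall_notMem]
    rintro x ⟨hxB, hxP⟩
    exact hdisj x (by rwa [← hPA]) (hBsS1.1 hxB)
  · intro hc
    refine hNC (Tset_mono (n+1) ?_ ?_ hc)
    · intro i
      induction i using Fin.cases with
      | zero =>
        simp only [Fin.cons_zero]
        rw [Ideal.span_eq]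
      | succ i => simp [Fin.cons_succ]
    · intro i
      induction i using Fin.cases with
      | zero =>
        simp only [Fin.cons_zero]
        exact Submonoid.closure_mono hBsS1.1
      | succ i => simp [Fin.cons_succ]


lemma Iio_succ_eq (n : ℕ) (i : Fin n) :
    Finset.Iio (i.succ : Fin (n+1)) =
      insert 0 ((Finset.Iio i).map ⟨Fin.succ, Fin.succ_injective n⟩) := by
  ext k
  simp only [Finset.mem_Iio, Finset.mem_insert, Finset.mem_map, Function.Embedding.coeFn_mk]
  induction k using Fin.cases with
  | zero => simp [Fin.succ_pos]
  | succ k =>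
    simp only [Fin.succ_lt_succ_iff]
    constructor
    · intro hk; exact Or.inr ⟨k, hk, rfl⟩
    · rintro (hk | ⟨a, ha, hak⟩)
      · exact absurd hk (Fin.succ_ne_zero k)
      · rwa [← Fin.succ_injective n hak]

lemma nv_eq : ∀ (n : ℕ) (u j : Fin n → R),
    nv n u j = (∏ i, u i) + ∑ i, (∏ k ∈ Finset.Iio i, u k) * j i
  | 0, u, j => by simp [nv]
  | n+1, u, j => by
    have hzero : (Finset.Iio (0 : Fin (n+1))) = ∅ := by
      ext k; simp
    have hsucc : ∀ i : Fin n, (∏ k ∈ Finset.Iio (i.succ : Fin (n+1)), u k)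
        = u 0 * ∏ k ∈ Finset.Iio i, u k.succ := by
      intro i
      rw [Iio_succ_eq, Finset.prod_insert (by simp [Fin.succ_ne_zero]), Finset.prod_map]
      rfl
    rw [nv, nv_eq n, Fin.prod_univ_succ, Fin.sum_univ_succ, hzero]
    simp only [Finset.prod_empty, one_mul, Fin.tail, hsucc]
    rw [mul_add, Finset.mul_sum]
    have hterm : ∀ x : Fin n, u 0 * ((∏ k ∈ Finset.Iio x, u k.succ) * j x.succ)
        = (u 0 * ∏ k ∈ Finset.Iio x, u k.succ) * j x.succ := fun x => by ring
    rw [Finset.sum_congr rfl (fun x _ => hterm x)]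
    ring

lemma Tset_sub : ∀ (n : ℕ) (J U : Fin n → Set R) (x : R), x ∈ Tset n J U →
    ∃ u j : Fin n → R, (∀ i, u i ∈ Submonoid.closure (U i)) ∧
      (∀ i, j i ∈ Ideal.span (J i)) ∧ x = nv n u j
  | 0, J, U, x, hx => by
    refine ⟨Fin.elim0, Fin.elim0, fun i => i.elim0, fun i => i.elim0, ?_⟩
    simpa [Tset, nv] using hx
  | n+1, J, U, x, hx => by
    obtain ⟨u0, hu0, e, he, k0, hk0, rfl⟩ := hx
    obtain ⟨ut, jt, hut, hjt, rfl⟩ := Tset_sub n _ _ e he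
    refine ⟨Fin.cons u0 ut, Fin.cons k0 jt, ?_, ?_, ?_⟩
    · intro i
      induction i using Fin.cases with
      | zero => simpa using hu0
      | succ i => simpa [Fin.tail] using hut i
    · intro i
      induction i using Fin.cases with
      | zero => simpa using hk0
      | succ i => simpa [Fin.tail] using hjt i
    · simp [nv, Fin.tail_cons]

lemma nv_not_mem : ∀ (n : ℕ) (J U : Fin (n+1) → Set R) (P : Fin (n+1) → Ideal R),
    Monotone P → (∀ i, (P i).IsPrime) → (∀ i, J i ⊆ ↑(P i)) → (∀ i, U i ∩ ↑(P i) = ∅) →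
    ∀ u j : Fin (n+1) → R, (∀ i, u i ∈ Submonoid.closure (U i)) →
    (∀ i, j i ∈ Ideal.span (J i)) → nv (n+1) u j ∉ P 0 := by
  intro n
  induction n with
  | zero =>
    intro J U P _ hpr hJP hUP u j hu hj hmem
    haveI := hpr 0
    have hu0 : u 0 ∉ P 0 := by
      have hsub : U 0 ⊆ ↑(P 0).primeCompl := fun y hy hyP =>
        Set.eq_empty_iff_forall_notMem.mp (hUP 0) y ⟨hy, hyP⟩
      exact (Submonoid.closure_le.mpr hsub) (hu 0)
    have hj0 : j 0 ∈ P 0 := Ideal.span_le.mpr (hJP 0) (hj 0)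
    have : u 0 * nv 0 (Fin.tail u) (Fin.tail j) ∈ P 0 := by
      have := Ideal.sub_mem _ hmem hj0
      simpa [nv] using this
    simp only [nv, mul_one] at this
    exact hu0 this
  | succ n ih =>
    intro J U P hmono hpr hJP hUP u j hu hj hmem
    haveI := hpr 0
    have hu0 : u 0 ∉ P 0 := by
      have hsub : U 0 ⊆ ↑(P 0).primeCompl := fun y hy hyP =>
        Set.eq_empty_iff_forall_notMem.mp (hUP 0) y ⟨hy, hyP⟩
      exact (Submonoid.closure_le.mpr hsub) (hu 0)
    have hj0 : j 0 ∈ P 0 := Ideal.span_le.mpr (hJP 0) (hj 0)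
    have ht : nv (n+1) (Fin.tail u) (Fin.tail j) ∉ P 1 := by
      refine ih (Fin.tail J) (Fin.tail U) (fun i => P i.succ)
        (fun a b hab => hmono (Fin.succ_le_succ_iff.mpr hab)) (fun i => hpr i.succ)
        (fun i => hJP i.succ) (fun i => hUP i.succ) _ _ (fun i => hu i.succ)
        (fun i => hj i.succ)
    have ht0 : nv (n+1) (Fin.tail u) (Fin.tail j) ∉ P 0 :=
      fun hc => ht (hmono (Fin.zero_le 1) hc)
    have hprod : u 0 * nv (n+1) (Fin.tail u) (Fin.tail j) ∈ P 0 := by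
      have := Ideal.sub_mem _ hmem hj0
      simpa [nv] using this
    rcases (hpr 0).mem_or_mem hprod with hc | hc
    · exact hu0 hc
    · exact ht0 hc

lemma monotone_cons {n : ℕ} {P0 : Ideal R} {Q : Fin (n+1) → Ideal R}
    (h0 : P0 ≤ Q 0) (hQ : Monotone Q) : Monotone (Fin.cons P0 Q) := by
  intro a b hab
  induction a using Fin.cases with
  | zero =>
    induction b using Fin.cases with
    | zero => exact le_rfl
    | succ b =>
      simp only [Fin.cons_zero, Fin.cons_succ]
      exact h0.trans (hQ (Fin.zero_le b))
  | succ a =>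
    induction b using Fin.cases with
    | zero => exact absurd (Fin.le_zero_iff.mp hab) (Fin.succ_ne_zero a)
    | succ b =>
      simp only [Fin.cons_succ]
      exact hQ (Fin.succ_le_succ_iff.mp hab)

lemma main_existence : ∀ (n : ℕ) (J U : Fin (n+1) → Set R), (0:R) ∉ Tset (n+1) J U →
    ∃ P : Fin (n+1) → Ideal R, Monotone P ∧ (∀ i, (P i).IsPrime) ∧
      (∀ i, J i ⊆ ↑(P i)) ∧ (∀ i, U i ∩ ↑(P i) = ∅)
  | 0, J, U, h => by
    rw [← Fin.cons_self_tail J, ← Fin.cons_self_tail U] at h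
    obtain ⟨P, hp, hA, hB, _⟩ := exists_prime_head 0 (Fin.tail J) (Fin.tail U) (J 0) (U 0) h
    refine ⟨fun _ => P, monotone_const, fun _ => hp, ?_, ?_⟩
    · intro i; rw [Fin.eq_zero i]; exact hA
    · intro i; rw [Fin.eq_zero i]; exact hB
  | n+1, J, U, h => by
    rw [← Fin.cons_self_tail J, ← Fin.cons_self_tail U] at h
    obtain ⟨P0, hp0, hA0, hB0, h2⟩ :=
      exists_prime_head (n+1) (Fin.tail J) (Fin.tail U) (J 0) (U 0) h
    set J' : Fin (n+1) → Set R :=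
      Fin.cons (J 1 ∪ (↑P0 : Set R)) (Fin.tail (Fin.tail J)) with hJ'
    have h3 : (0:R) ∉ Tset (n+1) J' (Fin.tail U) := by
      intro hmem
      obtain ⟨u1, hu1, e, he, k, hk, hEq⟩ := hmem
      rw [hJ', Fin.cons_zero, Ideal.span_union, Submodule.mem_sup] at hk
      obtain ⟨k1, hk1, p, hp, rfl⟩ := hk
      refine h2 ⟨1, one_mem _, u1 * e + k1, ?_, p, hp, by linear_combination hEq⟩
      refine ⟨u1, hu1, e, ?_, k1, ?_, rfl⟩
      · exact he
      · exact hk1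
    obtain ⟨Q, hQm, hQp, hQJ, hQU⟩ := main_existence n J' (Fin.tail U) h3
    have hP0Q : P0 ≤ Q 0 := by
      intro y hy
      exact hQJ 0 (by rw [hJ', Fin.cons_zero]; exact Set.mem_union_right _ hy)
    refine ⟨Fin.cons P0 Q, monotone_cons hP0Q hQm, ?_, ?_, ?_⟩
    · intro i
      induction i using Fin.cases with
      | zero => simpa using hp0
      | succ i => simpa using hQp i
    · intro i
      induction i using Fin.cases with
      | zero => simpa using hA0
      | succ i =>
        simp only [Fin.cons_succ]
        induction i using Fin.cases with
        | zero =>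
          intro y hy
          exact hQJ 0 (by rw [hJ', Fin.cons_zero]; exact Set.mem_union_left _ hy)
        | succ i =>
          intro y hy
          exact hQJ i.succ (by rw [hJ']; simpa [Fin.tail] using hy)
    · intro i
      induction i using Fin.cases with
      | zero => simpa using hB0
      | succ i =>
        simpa [Fin.tail] using hQU i


end IdealisticChainAux

open IdealisticChainAux in
theorem stmt_3 {R : Type*} [CommRing R] {ℓ : ℕ} (J U : Fin (ℓ + 1) → Set R) :
    (∃ P : Fin (ℓ + 1) → Ideal R, Monotone P ∧ (∀ i, (P i).IsPrime) ∧
      (∀ i, J i ⊆ ↑(P i)) ∧ (∀ i, U i ∩ ↑(P i) = ∅)) ↔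
    (∀ u j : Fin (ℓ + 1) → R,
      (∀ i, u i ∈ Submonoid.closure (U i)) →
      (∀ i, j i ∈ Ideal.span (J i)) →
      (∏ i, u i) + ∑ i, (∏ k ∈ Finset.Iio i, u k) * j i ≠ 0) := by
  constructor
  · rintro ⟨P, hmono, hpr, hJP, hUP⟩ u j hu hj h0
    have hnm := nv_not_mem ℓ J U P hmono hpr hJP hUP u j hu hj
    rw [nv_eq] at hnm
    exact hnm (h0 ▸ (P 0).zero_mem)
  · intro h
    have h0 : (0:R) ∉ Tset (ℓ+1) J U := by
      intro hmem
      obtain ⟨u, j, hu, hj, hnv⟩ := Tset_sub (ℓ+1) J U 0 hmem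
      exact h u j hu hj (by rw [← nv_eq]; exact hnv.symm)
    exact main_existence ℓ J U h0
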